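/- In the extended word x̄ = (x)(m-1)(x-1)(m-2)...(x-m+1)(0) of a word x of length k over Z/mZ, there are exactly k+1 occurrences of the letter 0, and these occur in distinct positions modulo k+1 (one in each residue class of positions mod k+1). -/

import Mathlib

/-- The extended word `x̄ = (x)(m-1)(x-1)(m-2)⋯(x-m+1)(0)` of a word `x` of length
`k` over `ℤ/mℤ`: the concatenation of the blocks `(x - i)(m-1-i)` for `i = 0,…,m-1`. -/
def extWord (m k : ℕ) (x : Fin k → ZMod m) : List (ZMod m) :=
  (List.range m).flatMap
    (fun (i : ℕ) => (List.ofFn x).map (fun a => a - (i : ZMod m)) ++ [((m - 1 - i : ℕ) : ZMod m)])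

lemma length_flatMap_range {α : Type*} (f : ℕ → List α) (n : ℕ)
    (hf : ∀ i, (f i).length = n) (m : ℕ) :
    ((List.range m).flatMap f).length = m * n := by
  induction m with
  | zero => simp
  | succ m ih =>
    rw [List.range_succ, List.flatMap_append]
    simp [ih, hf, Nat.succ_mul]

lemma getD_flatMap_range {α : Type*} (f : ℕ → List α) (n : ℕ)
    (hf : ∀ i, (f i).length = n) (m q r : ℕ) (hq : q < m) (hr : r < n) (d : α) :
    ((List.range m).flatMap f).getD (q * n + r) d = (f q).getD r d := by
  induction m with
  | zero => omega
  | succ m ih =>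
    rw [List.range_succ, List.flatMap_append]
    rcases Nat.lt_or_ge q m with h | h
    · rw [List.getD_append _ _ _ _ (by
        rw [length_flatMap_range f n hf]
        have h1 : q * n + r < (q + 1) * n := by rw [Nat.succ_mul]; omega
        have h2 : (q + 1) * n ≤ m * n := Nat.mul_le_mul_right n h
        omega)]
      exact ih h
    · have hq' : q = m := by omega
      subst hq'
      rw [List.getD_append_right _ _ _ _ (by rw [length_flatMap_range f n hf]; exact Nat.le_add_right _ _)]
      rw [length_flatMap_range f n hf]
      simp

lemma sum_count_cast_range (m : ℕ) [NeZero m] (L : List (ZMod m)) :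
    ∑ i ∈ Finset.range m, L.count ((i : ZMod m)) = L.length := by
  have h1 : ∑ i ∈ Finset.range m, L.count ((i : ZMod m)) = ∑ c : ZMod m, L.count c := by
    refine Finset.sum_bij (fun i _ => ((i : ZMod m))) ?_ ?_ ?_ ?_
    · intros; exact Finset.mem_univ _
    · intro a ha b hb hab
      have ha' := Finset.mem_range.mp ha
      have hb' := Finset.mem_range.mp hb
      have := congrArg ZMod.val hab
      rwa [ZMod.val_cast_of_lt ha', ZMod.val_cast_of_lt hb'] at this
    · intro c _
      exact ⟨c.val, Finset.mem_range.mpr (ZMod.val_lt c), by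
        simp [ZMod.natCast_val, ZMod.cast_id]⟩
    · intros; rfl
  rw [h1, ← List.sum_toFinset_count_eq_length L]
  exact (Finset.sum_subset (Finset.subset_univ _)
    (fun c _ hc => List.count_eq_zero_of_not_mem (by simpa using hc))).symm

lemma list_sum_range_eq_finset_sum {M : Type*} [AddCommMonoid M] (m : ℕ) (g : ℕ → M) :
    ((List.range m).map g).sum = ∑ i ∈ Finset.range m, g i := by
  rw [Finset.sum_range, ← List.sum_ofFn, List.ofFn_eq_map, ← (show (List.finRange m).map Fin.val = List.range m from
      List.ext_getElem (by simp) (by simp)),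
    List.map_map]
  rfl

/-- The extended word of `x` contains exactly `k+1` zeros, one in each residue class
of positions modulo `k+1`. -/
theorem extWord_zeros (m k : ℕ) (hm : 1 ≤ m) (x : Fin k → ZMod m) :
    (extWord m k x).count 0 = k + 1 ∧
      ∀ r, r < k + 1 →
        ∃! j, j < (k + 1) * m ∧ (extWord m k x).getD j 0 = 0 ∧ j % (k + 1) = r := by
  haveI : NeZero m := ⟨by omega⟩
  set B : ℕ → List (ZMod m) := fun i =>
    (List.ofFn x).map (fun a => a - (i : ZMod m)) ++ [((m - 1 - i : ℕ) : ZMod m)] with hBdef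
  have hB : ∀ i, (B i).length = k + 1 := by intro i; simp [hBdef]
  have hEW : extWord m k x = (List.range m).flatMap B := rfl
  -- value at position q*(k+1)+r
  have hget : ∀ q r, q < m → (h : r < k + 1) →
      (extWord m k x).getD (q * (k + 1) + r) 0 =
        if h' : r < k then x ⟨r, h'⟩ - (q : ZMod m) else ((m - 1 - q : ℕ) : ZMod m) := by
    intro q r hq h
    rw [hEW, getD_flatMap_range B (k + 1) hB m q r hq h]
    by_cases h' : r < k
    · rw [hBdef]
      rw [List.getD_append _ _ _ _ (by simpa using h')]
      rw [List.getD_eq_getElem _ _ (by simpa using h')]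
      simp [h']
    · have hr : r = k := by omega
      subst hr
      rw [hBdef, List.getD_append_right _ _ _ _ (by simp)]
      simp [h']
  -- zero characterization
  have hz : ∀ q r, q < m → (h : r < k + 1) →
      ((extWord m k x).getD (q * (k + 1) + r) 0 = 0 ↔
        q = if h' : r < k then (x ⟨r, h'⟩).val else m - 1) := by
    intro q r hq h
    rw [hget q r hq h]
    by_cases h' : r < k
    · simp only [dif_pos h']
      constructor
      · intro he
        have hcast : (q : ZMod m) = x ⟨r, h'⟩ := (sub_eq_zero.mp he).symm
        have hval : ((q : ZMod m)).val = q := ZMod.val_cast_of_lt hq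
        rw [hcast] at hval
        omega
      · intro he
        subst he
        rw [ZMod.natCast_val, ZMod.cast_id, sub_self]
    · simp only [dif_neg h']
      constructor
      · intro he
        have hd := (ZMod.natCast_eq_zero_iff (m - 1 - q) m).mp he
        have hlt : m - 1 - q < m := by omega
        have h0 : m - 1 - q = 0 := Nat.eq_zero_of_dvd_of_lt hd hlt
        omega
      · intro he
        subst he
        have h0 : m - 1 - (m - 1) = 0 := by omega
        rw [h0, Nat.cast_zero]
  constructor
  · -- count
    rw [hEW, List.count_flatMap, list_sum_range_eq_finset_sum]
    have hcnt : ∀ i ∈ Finset.range m, (List.count 0 ∘ B) i =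
        (List.ofFn x).count ((i : ZMod m)) +
          (if i = m - 1 then 1 else 0) := by
      intro i hi
      have hi' := Finset.mem_range.mp hi
      simp only [Function.comp, hBdef, List.count_append]
      congr 1
      · have hinj : Function.Injective (fun a : ZMod m => a - (i : ZMod m)) :=
          fun a b hab => by simpa using hab
        have hmap := List.count_map_of_injective (List.ofFn x)
          (fun a : ZMod m => a - (i : ZMod m)) hinj ((i : ZMod m))
        simpa using hmap
      · by_cases hi2 : i = m - 1
        · subst hi2
          have h0 : m - 1 - (m - 1) = 0 := by omega
          simp [h0]
        · have hne : ((m - 1 - i : ℕ) : ZMod m) ≠ 0 := by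
            intro he
            have hd := (ZMod.natCast_eq_zero_iff (m - 1 - i) m).mp he
            have hlt : m - 1 - i < m := by omega
            have h0 : m - 1 - i = 0 := Nat.eq_zero_of_dvd_of_lt hd hlt
            omega
          simp [hi2, List.count_singleton, hne]
    rw [Finset.sum_congr rfl hcnt, Finset.sum_add_distrib,
      sum_count_cast_range m (List.ofFn x),
      Finset.sum_ite_eq' (Finset.range m) (m - 1) (fun _ => 1)]
    simp [Finset.mem_range.mpr (by omega : m - 1 < m)]
  · -- unique positions
    intro r hr
    set q0 : ℕ := if h' : r < k then (x ⟨r, h'⟩).val else m - 1 with hq0def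
    have hq0 : q0 < m := by
      rw [hq0def]
      split
      · exact ZMod.val_lt _
      · omega
    refine ⟨q0 * (k + 1) + r, ⟨?_, ?_, ?_⟩, ?_⟩
    · have h1 : q0 * (k + 1) + r < (q0 + 1) * (k + 1) := by rw [Nat.succ_mul]; omega
      have h2 : (q0 + 1) * (k + 1) ≤ m * (k + 1) := Nat.mul_le_mul_right _ hq0
      have h3 := Nat.mul_comm m (k + 1)
      omega
    · exact (hz q0 r hq0 hr).mpr rfl
    · rw [Nat.add_comm, Nat.add_mul_mod_self_right, Nat.mod_eq_of_lt hr]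
    · rintro j ⟨hj1, hj2, hj3⟩
      have hdm := Nat.div_add_mod j (k + 1)
      set q := j / (k + 1) with hq
      have hqm : q < m := by
        rw [hq]
        exact Nat.div_lt_of_lt_mul (by omega)
      have hmc : (k + 1) * q = q * (k + 1) := Nat.mul_comm _ _
      have hj : j = q * (k + 1) + r := by omega
      rw [hj] at hj2
      have hqq : q = q0 := (hz q r hqm hr).mp hj2
      rw [hj, hqq]
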